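/- Let A = (A_1, A_2) be a pair of real symmetric 2×2 matrices with entries A_k = [[a_{11k}, a_{12k}],[a_{12k}, a_{22k}]], and suppose the free spectrahedron D_A is bounded at level 1 (i.e., {x ∈ ℝ² : I + x_1 A_1 + x_2 A_2 ⪰ 0} is bounded). Then the 3×3 matrix W = [[1, (a_{111}+a_{221})/2, (a_{112}+a_{222})/2],[0, (a_{111}-a_{221})/2, (a_{112}-a_{222})/2],[0, a_{121}, a_{122}]] is invertible. -/

import Mathlib

open Matrix

theorem stmt10 (a111 a121 a221 a112 a122 a222 : ℝ)
    (hbdd : Bornology.IsBounded {x : ℝ × ℝ |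
        ((1 : Matrix (Fin 2) (Fin 2) ℝ) +
          x.1 • (!![a111, a121; a121, a221] : Matrix (Fin 2) (Fin 2) ℝ) +
          x.2 • (!![a112, a122; a122, a222] : Matrix (Fin 2) (Fin 2) ℝ)).PosSemidef}) :
    IsUnit (!![1, (a111 + a221) / 2, (a112 + a222) / 2;
               0, (a111 - a221) / 2, (a112 - a222) / 2;
               0, a121, a122] : Matrix (Fin 3) (Fin 3) ℝ) := by
  rw [Matrix.isUnit_iff_isUnit_det, isUnit_iff_ne_zero, Matrix.det_fin_three]
  intro hdet
  norm_num [Matrix.cons_val_zero, Matrix.cons_val_one, Matrix.head_cons, Matrix.vecHead,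
    Matrix.vecTail, Function.comp] at hdet
  -- det = ((a111-a221)*a122 - (a112-a222)*a121)/2 = 0
  have hd : (a111 - a221) * a122 - (a112 - a222) * a121 = 0 := by
    simp only [Matrix.cons_val] at hdet; linarith
  -- find (c1, c2) ≠ 0 with c1•A1 + c2•A2 = t • I
  obtain ⟨c1, c2, hc, h1, h2⟩ :
      ∃ c1 c2 : ℝ, ¬(c1 = 0 ∧ c2 = 0) ∧ c1 * a121 + c2 * a122 = 0 ∧
        c1 * (a111 - a221) + c2 * (a112 - a222) = 0 := by
    by_cases h : a111 - a221 = 0 ∧ a112 - a222 = 0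
    · by_cases h' : a121 = 0 ∧ a122 = 0
      · exact ⟨1, 0, by simp, by simp [h'.1], by simp [h.1]⟩
      · exact ⟨a122, -a121, fun hh => h' ⟨by linarith [hh.2], hh.1⟩, by ring,
          by rw [h.1, h.2]; ring⟩
    · refine ⟨a112 - a222, -(a111 - a221), fun hh => h ⟨by linarith [hh.2], hh.1⟩,
        by linarith, by ring⟩
  set t : ℝ := c1 * a111 + c2 * a112 with ht
  -- the other diagonal entry also equals t
  have ht2 : c1 * a221 + c2 * a222 = t := by rw [ht]; linarith
  obtain ⟨C, hC⟩ := isBounded_iff_forall_norm_le.mp hbdd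
  set ε : ℝ := if 0 ≤ t then 1 else -1 with hε
  have hεt : 0 ≤ ε * t := by
    rw [hε]; split_ifs with h
    · simpa using h
    · nlinarith [not_le.mp h]
  have hε1 : ε = 1 ∨ ε = -1 := by rw [hε]; split_ifs <;> simp
  have hεabs : ∀ y : ℝ, |ε * y| = |y| := by
    intro y; rcases hε1 with h | h <;> simp [h, abs_neg]
  -- for every r ≥ 0, the point r • ε • (c1, c2) is in the set
  have hmem : ∀ r : ℝ, 0 ≤ r → ((r * ε * c1, r * ε * c2) : ℝ × ℝ) ∈
      {x : ℝ × ℝ |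
        ((1 : Matrix (Fin 2) (Fin 2) ℝ) +
          x.1 • (!![a111, a121; a121, a221] : Matrix (Fin 2) (Fin 2) ℝ) +
          x.2 • (!![a112, a122; a122, a222] : Matrix (Fin 2) (Fin 2) ℝ)).PosSemidef} := by
    intro r hr
    have key : ((1 : Matrix (Fin 2) (Fin 2) ℝ) +
          (r * ε * c1) • (!![a111, a121; a121, a221] : Matrix (Fin 2) (Fin 2) ℝ) +
          (r * ε * c2) • (!![a112, a122; a122, a222] : Matrix (Fin 2) (Fin 2) ℝ)) =
        Matrix.diagonal (fun _ => (1 + r * (ε * t))) := by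
      ext i j
      fin_cases i <;> fin_cases j <;>
        simp [Matrix.one_apply, Matrix.diagonal] <;>
        first
          | linear_combination (-(r * ε)) * ht
          | linear_combination (r * ε) * h1
          | linear_combination (r * ε) * ht2
    rw [Set.mem_setOf_eq, key]
    exact Matrix.posSemidef_diagonal_iff.mpr fun i => by positivity
  -- derive a contradiction from boundedness
  have hcc : 0 < |c1| + |c2| := by
    rcases not_and_or.mp hc with h | h
    · linarith [abs_pos.mpr h, abs_nonneg c2]
    · linarith [abs_pos.mpr h, abs_nonneg c1]
  set r : ℝ := (2 * |C| + 1) * (|c1| + |c2|)⁻¹ with hrdef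
  have hr0 : 0 ≤ r := by positivity
  have := hC _ (hmem r hr0)
  rw [Prod.norm_def] at this
  have hnorm1 : |r * ε * c1| = r * |c1| := by
    rw [mul_assoc, abs_mul, hεabs c1, abs_of_nonneg hr0]
  have hnorm2 : |r * ε * c2| = r * |c2| := by
    rw [mul_assoc, abs_mul, hεabs c2, abs_of_nonneg hr0]
  have hle : r * |c1| ≤ C ∧ r * |c2| ≤ C := by
    constructor
    · calc r * |c1| = ‖r * ε * c1‖ := by rw [Real.norm_eq_abs, hnorm1]
        _ ≤ max ‖r * ε * c1‖ ‖r * ε * c2‖ := le_max_left _ _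
        _ ≤ C := this
    · calc r * |c2| = ‖r * ε * c2‖ := by rw [Real.norm_eq_abs, hnorm2]
        _ ≤ max ‖r * ε * c1‖ ‖r * ε * c2‖ := le_max_right _ _
        _ ≤ C := this
  have hsum : r * (|c1| + |c2|) ≤ 2 * C := by nlinarith [hle.1, hle.2]
  have hrs : r * (|c1| + |c2|) = 2 * |C| + 1 := by
    rw [hrdef, mul_assoc, inv_mul_cancel₀ (ne_of_gt hcc), mul_one]
  nlinarith [abs_nonneg C, le_abs_self C]
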